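/- For the encoder E_G of a standard-form [[n,k,d]] graph code with classical codeword matrix Γ and graph G, the Choi state |E_G⟩ on k+n qubits is (up to Hadamards on the first k qubits) the graph state of the graph on k+n vertices with adjacency matrix [[0, Γ],[Γ^T, G]]; equivalently |E_G⟩ has stabilizer check matrix [[I_k, 0 | 0, Γ],[0, I_n | Γ^T, G]]. -/

import Mathlib

open Finset

/-- Graph state (amplitudes) associated to an adjacency matrix `A` on vertices
`q`, with a vertex ordering `ord` used to enumerate each edge once:
amplitude `(-1)^{#{edges with both endpoints set to 1}}`. -/
def genGraphState {q : Type} [Fintype q] [DecidableEq q] (ord : q → ℕ)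
    (A : q → q → ZMod 2) (s : q → ZMod 2) : ℂ :=
  (-1 : ℂ) ^ ((Finset.univ.filter (fun p : q × q =>
      ord p.1 < ord p.2 ∧ A p.1 p.2 = 1 ∧ s p.1 = 1 ∧ s p.2 = 1)).card)


private def chi (x : ZMod 2) : ℂ := (-1 : ℂ) ^ x.val

private lemma chi_zero : chi 0 = 1 := rfl
private lemma chi_one : chi 1 = -1 := by rw [chi, show (1 : ZMod 2).val = 1 from rfl]; norm_num

private lemma chi_add (x y : ZMod 2) : chi (x + y) = chi x * chi y := by
  have h2 : ((1 : ZMod 2) + 1) = 0 := rfl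
  rcases (by decide : ∀ z : ZMod 2, z = 0 ∨ z = 1) x with rfl | rfl <;>
    rcases (by decide : ∀ z : ZMod 2, z = 0 ∨ z = 1) y with rfl | rfl <;> simp [h2, chi_zero, chi_one]

private lemma chi_mul_self (x : ZMod 2) : chi x * chi x = 1 := by
  fin_cases x <;> norm_num [chi, ZMod.val]

private lemma chi_sum {ι : Type*} (t : Finset ι) (f : ι → ZMod 2) :
    chi (∑ i ∈ t, f i) = ∏ i ∈ t, chi (f i) := by
  classical
  induction t using Finset.cons_induction with
  | empty => simp [chi_zero]
  | cons a t ha ih => rw [Finset.sum_cons, Finset.prod_cons, chi_add, ih]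

private lemma mul3_eq_one : ∀ a b c : ZMod 2, a * b * c = 1 ↔ (a = 1 ∧ b = 1 ∧ c = 1) := by
  decide

private lemma zmod2_ne_one : ∀ a : ZMod 2, a ≠ 1 → a = 0 := by decide

private lemma genGraphState_eq_chi {q : Type} [Fintype q] [DecidableEq q] (ord : q → ℕ)
    (A : q → q → ZMod 2) (s : q → ZMod 2) :
    genGraphState ord A s =
      chi (∑ p : q × q, if ord p.1 < ord p.2 then A p.1 p.2 * s p.1 * s p.2 else 0) := by
  rw [genGraphState, Finset.card_filter, chi_sum, ← Finset.prod_pow_eq_pow_sum]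
  refine Finset.prod_congr rfl fun p _ => ?_
  by_cases h1 : ord p.1 < ord p.2
  · simp only [h1, if_true, true_and]
    by_cases h2 : A p.1 p.2 * s p.1 * s p.2 = 1
    · rw [if_pos ((mul3_eq_one _ _ _).mp h2), h2, chi_one, pow_one]
    · rw [if_neg (fun hc => h2 ((mul3_eq_one _ _ _).mpr hc)), zmod2_ne_one _ h2]
      rfl
  · simp [h1, chi]

/-- The Pauli operator `X^x Z^z` acting on a state of qubits indexed by `q`. -/
def pauliAct {q : Type} [Fintype q] (x z : q → ZMod 2)
    (ψ : (q → ZMod 2) → ℂ) : (q → ZMod 2) → ℂ :=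
  fun s => (-1 : ℂ) ^ ((∑ j, z j * (s j + x j)).val) * ψ (s + x)

private lemma Q_flip {q : Type} [Fintype q] [DecidableEq q] {ord : q → ℕ}
    (hord : Function.Injective ord) {A : q → q → ZMod 2}
    (hsym : ∀ a b, A a b = A b a) {u : q} (hdiag : A u u = 0) (s : q → ZMod 2) :
    (∑ p : q × q, if ord p.1 < ord p.2 then
        A p.1 p.2 * (s + fun w : q => if w = u then (1:ZMod 2) else 0) p.1 *
          (s + fun w : q => if w = u then (1:ZMod 2) else 0) p.2 else 0)
    = (∑ p : q × q, if ord p.1 < ord p.2 then A p.1 p.2 * s p.1 * s p.2 else 0)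
      + ∑ w, A u w * s w := by
  have key : ∀ p : q × q,
      (if ord p.1 < ord p.2 then
        A p.1 p.2 * (s + fun w : q => if w = u then (1:ZMod 2) else 0) p.1 *
          (s + fun w : q => if w = u then (1:ZMod 2) else 0) p.2 else 0)
      = (if ord p.1 < ord p.2 then A p.1 p.2 * s p.1 * s p.2 else 0)
        + ((if ord p.1 < ord p.2 ∧ p.1 = u then A u p.2 * s p.2 else 0)
          + (if ord p.1 < ord p.2 ∧ p.2 = u then A u p.1 * s p.1 else 0)) := by
    rintro ⟨a, b⟩
    by_cases h : ord a < ord b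
    · simp only [h, if_true, true_and, Pi.add_apply]
      by_cases ha : a = u <;> by_cases hb : b = u
      · exact absurd (ha.trans hb.symm) (fun e => lt_irrefl _ (e ▸ h))
      · subst ha; simp only [if_pos rfl, if_neg hb, if_true, if_false]; ring
      · subst hb; simp only [if_pos rfl, if_neg ha, if_true, if_false, ← hsym a b]; ring
      · simp only [if_neg ha, if_neg hb, if_false]; ring
    · simp [h]
  rw [Finset.sum_congr rfl (fun p _ => key p), Finset.sum_add_distrib,
    Finset.sum_add_distrib]
  congr 1
  have e1 : (∑ p : q × q, if ord p.1 < ord p.2 ∧ p.1 = u then A u p.2 * s p.2 else 0)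
      = ∑ w, if ord u < ord w then A u w * s w else 0 := by
    rw [Fintype.sum_prod_type]
    rw [Finset.sum_eq_single u]
    · exact Finset.sum_congr rfl fun w _ => by by_cases h : ord u < ord w <;> simp [h]
    · intro x _ hx
      exact Finset.sum_eq_zero fun w _ => by simp [hx]
    · simp
  have e2 : (∑ p : q × q, if ord p.1 < ord p.2 ∧ p.2 = u then A u p.1 * s p.1 else 0)
      = ∑ w, if ord w < ord u then A u w * s w else 0 := by
    rw [Fintype.sum_prod_type]
    refine Finset.sum_congr rfl fun w _ => ?_
    rw [Finset.sum_eq_single u]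
    · by_cases h : ord w < ord u <;> simp [h]
    · intro x _ hx; simp [hx]
    · simp
  rw [e1, e2, ← Finset.sum_add_distrib]
  refine Finset.sum_congr rfl fun w _ => ?_
  by_cases hw : w = u
  · subst hw; simp [hdiag]
  · have : ord w ≠ ord u := fun h => hw (hord h)
    rcases this.lt_or_gt with h | h
    · simp [h, not_lt.mpr h.le]
    · simp [h, not_lt.mpr h.le]

private lemma pauliAct_genGraphState {q : Type} [Fintype q] [DecidableEq q] {ord : q → ℕ}
    (hord : Function.Injective ord) {A : q → q → ZMod 2}
    (hsym : ∀ a b, A a b = A b a) {u : q} (hdiag : A u u = 0) :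
    pauliAct (fun w => if w = u then 1 else 0) (A u) (genGraphState ord A)
      = genGraphState ord A := by
  funext s
  have hphase : (∑ j, A u j * (s j + if j = u then 1 else 0)) = ∑ j, A u j * s j := by
    rw [show (∑ j, A u j * (s j + if j = u then 1 else 0))
        = ∑ j, (A u j * s j + A u j * (if j = u then 1 else 0)) from
      Finset.sum_congr rfl fun j _ => by ring, Finset.sum_add_distrib]
    simp [mul_ite, hdiag]
  rw [pauliAct]
  show chi (∑ j, A u j * (s j + if j = u then 1 else 0)) * genGraphState ord A
      (s + fun w : q => if w = u then (1:ZMod 2) else 0) = genGraphState ord A s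
  rw [hphase, genGraphState_eq_chi, genGraphState_eq_chi, Q_flip hord hsym hdiag,
    chi_add, ← mul_assoc, mul_comm (chi (∑ j, A u j * s j)), mul_assoc,
    chi_mul_self, mul_one]

variable {k n : ℕ}

/-- The block adjacency matrix `[[0, Γ],[Γᵀ, G]]` on the `k + n` vertices
`Fin k ⊕ Fin n`. -/
def bigAdj (Γ : Matrix (Fin k) (Fin n) (ZMod 2)) (G : SimpleGraph (Fin n))
    [DecidableRel G.Adj] : (Fin k ⊕ Fin n) → (Fin k ⊕ Fin n) → ZMod 2 :=
  fun u w =>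
    Sum.elim (fun a => Sum.elim (fun _ : Fin k => (0 : ZMod 2)) (fun j => Γ a j) w)
      (fun j => Sum.elim (fun a => Γ a j) (fun j' => G.adjMatrix (ZMod 2) j j') w) u

/-- The Choi state `|E_G⟩ = Σ_i |i⟩ ⊗ Z^{iΓ}|G⟩` of the standard-form graph
code encoder, as amplitudes on `k + n` qubits indexed by `Fin k ⊕ Fin n`. -/
def choiState (Γ : Matrix (Fin k) (Fin n) (ZMod 2)) (G : SimpleGraph (Fin n))
    [DecidableRel G.Adj] : ((Fin k ⊕ Fin n) → ZMod 2) → ℂ :=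
  fun s => (-1 : ℂ) ^ ((∑ a, ∑ j, s (Sum.inl a) * Γ a j * s (Sum.inr j)).val) *
    genGraphState (fun j : Fin n => (j : ℕ)) (G.adjMatrix (ZMod 2))
      (fun j => s (Sum.inr j))

private lemma bigAdj_symm (Γ : Matrix (Fin k) (Fin n) (ZMod 2)) (G : SimpleGraph (Fin n))
    [DecidableRel G.Adj] : ∀ u w, bigAdj Γ G u w = bigAdj Γ G w u := by
  rintro (a | j) (b | j') <;> simp [bigAdj, SimpleGraph.adjMatrix_apply, G.adj_comm]

private lemma bigAdj_diag (Γ : Matrix (Fin k) (Fin n) (ZMod 2)) (G : SimpleGraph (Fin n))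
    [DecidableRel G.Adj] : ∀ u, bigAdj Γ G u u = 0 := by
  rintro (a | j) <;> simp [bigAdj]

private lemma ord_inj : Function.Injective (fun u : Fin k ⊕ Fin n => (finSumFinEquiv u : ℕ)) :=
  fun a b h => finSumFinEquiv.injective (Fin.val_injective h)

private lemma choiState_eq (Γ : Matrix (Fin k) (Fin n) (ZMod 2)) (G : SimpleGraph (Fin n))
    [DecidableRel G.Adj] :
    choiState Γ G = genGraphState (fun u => (finSumFinEquiv u : ℕ)) (bigAdj Γ G) := by
  funext s
  rw [genGraphState_eq_chi (fun u => (finSumFinEquiv u : ℕ))]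
  refine (congrArg (fun x => (-1 : ℂ) ^ ((∑ a, ∑ j, s (Sum.inl a) * Γ a j * s (Sum.inr j)).val) * x)
    (genGraphState_eq_chi _ _ _)).trans ?_
  show chi (∑ a, ∑ j, s (Sum.inl a) * Γ a j * s (Sum.inr j)) * chi _ = _
  rw [← chi_add]
  congr 1
  have hL : ∀ a : Fin k,
      (∑ w : Fin k ⊕ Fin n, if (((finSumFinEquiv (Sum.inl a) : Fin (k+n)) : ℕ)) < (finSumFinEquiv w : ℕ)
          then bigAdj Γ G (Sum.inl a) w * s (Sum.inl a) * s w else 0)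
      = ∑ j, s (Sum.inl a) * Γ a j * s (Sum.inr j) := by
    intro a
    rw [Fintype.sum_sum_type]
    have h1 : (∑ b : Fin k, if (((finSumFinEquiv (Sum.inl a) : Fin (k+n)) : ℕ)) < ((finSumFinEquiv (Sum.inl b) : Fin (k+n)) : ℕ)
        then bigAdj Γ G (Sum.inl a) (Sum.inl b) * s (Sum.inl a) * s (Sum.inl b) else 0) = 0 := by
      refine Finset.sum_eq_zero fun b _ => ?_
      simp [bigAdj]
    rw [h1, zero_add]
    refine Finset.sum_congr rfl fun j _ => ?_
    have hc : (((finSumFinEquiv (Sum.inl a) : Fin (k+n)) : ℕ)) < ((finSumFinEquiv (Sum.inr j) : Fin (k+n)) : ℕ) := by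
      simp only [finSumFinEquiv_apply_left, finSumFinEquiv_apply_right, Fin.coe_castAdd,
        Fin.coe_natAdd]
      omega
    rw [if_pos hc]
    show Γ a j * s (Sum.inl a) * s (Sum.inr j) = _
    ring
  have hR : ∀ j : Fin n,
      (∑ w : Fin k ⊕ Fin n, if (((finSumFinEquiv (Sum.inr j) : Fin (k+n)) : ℕ)) < (finSumFinEquiv w : ℕ)
          then bigAdj Γ G (Sum.inr j) w * s (Sum.inr j) * s w else 0)
      = ∑ j' : Fin n, if (j : ℕ) < (j' : ℕ)
          then G.adjMatrix (ZMod 2) j j' * s (Sum.inr j) * s (Sum.inr j') else 0 := by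
    intro j
    rw [Fintype.sum_sum_type]
    have h1 : (∑ a : Fin k, if (((finSumFinEquiv (Sum.inr j) : Fin (k+n)) : ℕ)) < ((finSumFinEquiv (Sum.inl a) : Fin (k+n)) : ℕ)
        then bigAdj Γ G (Sum.inr j) (Sum.inl a) * s (Sum.inr j) * s (Sum.inl a) else 0) = 0 := by
      refine Finset.sum_eq_zero fun a _ => ?_
      have : ¬ (((finSumFinEquiv (Sum.inr j) : Fin (k+n)) : ℕ)) < ((finSumFinEquiv (Sum.inl a) : Fin (k+n)) : ℕ) := by
        simp only [finSumFinEquiv_apply_left, finSumFinEquiv_apply_right, Fin.coe_castAdd,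
          Fin.coe_natAdd]
        omega
      rw [if_neg this]
    rw [h1, zero_add]
    refine Finset.sum_congr rfl fun j' _ => ?_
    have : ((((finSumFinEquiv (Sum.inr j) : Fin (k+n)) : ℕ)) < ((finSumFinEquiv (Sum.inr j') : Fin (k+n)) : ℕ)) ↔ (j : ℕ) < (j' : ℕ) := by
      simp only [finSumFinEquiv_apply_right, Fin.coe_natAdd]
      omega
    exact if_congr this rfl rfl
  conv_rhs => rw [Fintype.sum_prod_type, Fintype.sum_sum_type]
  rw [Finset.sum_congr rfl (fun a _ => hL a), Finset.sum_congr rfl (fun j _ => hR j)]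
  congr 1
  rw [Fintype.sum_prod_type]


/-- The Choi state of the encoder `E_G` of a standard-form `[[n,k,d]]` graph
code is (up to a nonzero scalar) the graph state of the graph on `k + n`
vertices with adjacency matrix `[[0, Γ],[Γᵀ, G]]`; equivalently `|E_G⟩` is
stabilized by the Paulis with check matrix `[[I_k, 0 | 0, Γ],[0, I_n | Γᵀ, G]]`. -/
theorem choiState_graph_code (Γ : Matrix (Fin k) (Fin n) (ZMod 2))
    (G : SimpleGraph (Fin n)) [DecidableRel G.Adj] :
    (∃ c : ℂ, c ≠ 0 ∧ choiState Γ G =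
      c • genGraphState (fun u => (finSumFinEquiv u : ℕ)) (bigAdj Γ G)) ∧
    (∀ a : Fin k, pauliAct
        (fun u => if u = Sum.inl a then 1 else 0)
        (fun u => Sum.elim (fun _ : Fin k => (0 : ZMod 2)) (fun j => Γ a j) u)
        (choiState Γ G) = choiState Γ G) ∧
    (∀ v : Fin n, pauliAct
        (fun u => if u = Sum.inr v then 1 else 0)
        (fun u => Sum.elim (fun a => Γ a v) (fun j => G.adjMatrix (ZMod 2) v j) u)
        (choiState Γ G) = choiState Γ G) := by
  refine ⟨⟨1, one_ne_zero, by rw [choiState_eq, one_smul]⟩, fun a => ?_, fun v => ?_⟩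
  · rw [choiState_eq]
    exact pauliAct_genGraphState ord_inj (bigAdj_symm Γ G) (bigAdj_diag Γ G (Sum.inl a))
  · rw [choiState_eq]
    exact pauliAct_genGraphState ord_inj (bigAdj_symm Γ G) (bigAdj_diag Γ G (Sum.inr v))
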